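/- Let G be a cubic edge-reflexive graph and let X = L(G). Then for each edge e of G, the graph B(X) − φ_X(e), obtained from B(X) by deleting all color classes that contain e, is bipartite; moreover, it is connected when e is a half-edge, and it has exactly two connected components when e is a full edge. -/

import Mathlib

open SimpleGraph

/-- A `k`-coloring of a graph `X`: a partition of the vertex set into `k`
(possibly empty) independent sets, the color classes of the coloring. -/
def IsColoring {V : Type*} (k : ℕ) (X : SimpleGraph V) (c : Fin k → Set V) : Prop :=
  (∀ v : V, ∃! i : Fin k, v ∈ c i) ∧
  ∀ i : Fin k, ∀ u ∈ c i, ∀ w ∈ c i, ¬ X.Adj u w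

/-- `S` occurs as a color class in some `k`-coloring of `X`. -/
def IsColorClass {V : Type*} (k : ℕ) (X : SimpleGraph V) (S : Set V) : Prop :=
  ∃ c : Fin k → Set V, IsColoring k X c ∧ ∃ i, c i = S

/-- The `k`-coloring complex `B(X)`: vertices are the color classes of
`k`-colorings of `X`, two of them adjacent if they occur together in some
`k`-coloring of `X`. -/
def ColoringComplex {V : Type*} (k : ℕ) (X : SimpleGraph V) :
    SimpleGraph {S : Set V // IsColorClass k X S} where
  Adj C D := C ≠ D ∧ ∃ c : Fin k → Set V,
    IsColoring k X c ∧ (∃ i, c i = C.1) ∧ (∃ j, c j = D.1)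
  symm := ⟨by
    rintro C D ⟨hne, c, hc, hi, hj⟩
    exact ⟨hne.symm, c, hc, hj, hi⟩⟩
  loopless := ⟨by rintro C ⟨hne, -⟩; exact hne rfl⟩

/-- The canonical map `φ_X`, sending a vertex `v` to the set of all color
classes containing `v`. -/
def phi {V : Type*} (k : ℕ) (X : SimpleGraph V) (v : V) :
    Set {S : Set V // IsColorClass k X S} :=
  {C | v ∈ C.1}

/-- `X` is reflexive for `k`-colorings: the canonical map `φ_X` is a graph
isomorphism from `X` onto `B²(X) = B(B(X))`. -/
def IsReflexive {V : Type*} (k : ℕ) (X : SimpleGraph V) : Prop :=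
  ∃ f : X ≃g ColoringComplex k (ColoringComplex k X),
    ∀ v : V, (f v : {T // IsColorClass k (ColoringComplex k X) T}).1 = phi k X v

/-- `X` is colorful for `k`-colorings: any two distinct vertices lie in
different color classes of some `k`-coloring of `X`. -/
def Colorful {V : Type*} (k : ℕ) (X : SimpleGraph V) : Prop :=
  ∀ x y : V, x ≠ y → ∃ c : Fin k → Set V, IsColoring k X c ∧
    ∃ i j : Fin k, i ≠ j ∧ x ∈ c i ∧ y ∈ c j

/-- A cubic graph, possibly with half-edges (edges incident with a single
vertex, recorded as edges whose set of ends is a singleton), without parallel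
edges: every vertex is incident with exactly three edges. -/
structure CubicGraph (V E : Type*) [DecidableEq V] where
  ends : E → Finset V
  ends_card : ∀ e, (ends e).card = 1 ∨ (ends e).card = 2
  no_parallel : ∀ e f, (ends e).card = 2 → ends e = ends f → e = f
  cubic : ∀ v : V, ∃ a b c : E, a ≠ b ∧ a ≠ c ∧ b ≠ c ∧
    ∀ f : E, v ∈ ends f ↔ f = a ∨ f = b ∨ f = c

/-- The line graph of a cubic graph: its vertices are the edges of `G`
(including half-edges), two of them adjacent when they share an endpoint. -/
def lineGraph {V E : Type*} [DecidableEq V] (G : CubicGraph V E) : SimpleGraph E where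
  Adj e f := e ≠ f ∧ (G.ends e ∩ G.ends f).Nonempty
  symm := ⟨by rintro e f ⟨hne, hint⟩; exact ⟨hne.symm, by rwa [Finset.inter_comm]⟩⟩
  loopless := ⟨by rintro e ⟨hne, -⟩; exact hne rfl⟩

/-- A cubic graph is edge-reflexive if its line graph is reflexive for
3-colorings. -/
def EdgeReflexive {V E : Type*} [DecidableEq V] (G : CubicGraph V E) : Prop :=
  IsReflexive 3 (lineGraph G)

/-- A cubic graph is edge-colorful if its line graph is colorful for
3-colorings. -/
def EdgeColorful {V E : Type*} [DecidableEq V] (G : CubicGraph V E) : Prop :=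
  Colorful 3 (lineGraph G)

/-- The underlying simple graph of a cubic graph: two vertices are adjacent
when some (full) edge joins them. -/
def underlying {V E : Type*} [DecidableEq V] (G : CubicGraph V E) : SimpleGraph V where
  Adj u w := u ≠ w ∧ ∃ e, G.ends e = {u, w}
  symm := ⟨by rintro u w ⟨hne, e, he⟩; exact ⟨hne.symm, e, by rwa [Finset.pair_comm]⟩⟩
  loopless := ⟨by rintro u ⟨hne, -⟩; exact hne rfl⟩


private lemma fin3_mem (i a b c : Fin 3) (hab : a ≠ b) (hac : a ≠ c) (hbc : b ≠ c) :
    i = a ∨ i = b ∨ i = c := by revert i a b c; decide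

private lemma fin3_eq' (i j s t : Fin 3) (hij : i ≠ j) (hsi : s ≠ i) (hsj : s ≠ j)
    (hti : t ≠ i) (htj : t ≠ j) : s = t := by revert i j s t; decide

private lemma fin2_mem (i : Fin 2) : i = 0 ∨ i = 1 := by revert i; decide

lemma adj_disjoint {k : ℕ} {W : Type*} {X : SimpleGraph W}
    {C D : {S : Set W // IsColorClass k X S}}
    (h : (ColoringComplex k X).Adj C D) {x : W} (hx : x ∈ C.1) (hy : x ∈ D.1) : False := by
  obtain ⟨hne, c, hc, ⟨i, hi⟩, ⟨j, hj⟩⟩ := h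
  have hij : i ≠ j := by
    rintro rfl
    exact hne (Subtype.ext (hi.symm.trans hj))
  obtain ⟨i0, -, hu⟩ := hc.1 x
  have hxi : x ∈ c i := by rw [hi]; exact hx
  have hxj : x ∈ c j := by rw [hj]; exact hy
  exact hij ((hu i hxi).trans (hu j hxj).symm)

lemma class_not_both {W : Type*} {X : SimpleGraph W} {x y : W} (hxy : X.Adj x y)
    {S : Set W} (hS : IsColorClass 3 X S) (hx : x ∈ S) (hy : y ∈ S) : False := by
  obtain ⟨c, hc, i, rfl⟩ := hS
  exact hc.2 i x hx y hy hxy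

lemma exists_triple {V E : Type*} [DecidableEq V] (G : CubicGraph V E) {e : E} {v : V}
    (hv : v ∈ G.ends e) :
    ∃ f g : E, e ≠ f ∧ e ≠ g ∧ f ≠ g ∧ v ∈ G.ends f ∧ v ∈ G.ends g ∧
      ∀ x, v ∈ G.ends x ↔ x = e ∨ x = f ∨ x = g := by
  obtain ⟨a, b, c, hab, hac, hbc, h⟩ := G.cubic v
  have hmem : ∀ x, (x = a ∨ x = b ∨ x = c) → v ∈ G.ends x := fun x hx => (h x).2 hx
  rcases (h e).1 hv with rfl | rfl | rfl
  · exact ⟨b, c, hab, hac, hbc, hmem b (by tauto), hmem c (by tauto),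
      fun x => (h x).trans (by tauto)⟩
  · exact ⟨a, c, hab.symm, hbc, hac, hmem a (by tauto), hmem c (by tauto),
      fun x => (h x).trans (by tauto)⟩
  · exact ⟨a, b, hac.symm, hbc.symm, hab, hmem a (by tauto), hmem b (by tauto),
      fun x => (h x).trans (by tauto)⟩

lemma class_trichotomy {V E : Type*} [DecidableEq V] (G : CubicGraph V E)
    {e f g : E} {v : V}
    (hef : e ≠ f) (heg : e ≠ g) (hfg : f ≠ g)
    (hve : v ∈ G.ends e) (hvf : v ∈ G.ends f) (hvg : v ∈ G.ends g)
    {S : Set E} (hS : IsColorClass 3 (lineGraph G) S) :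
    e ∈ S ∨ f ∈ S ∨ g ∈ S := by
  obtain ⟨c, hc, i, rfl⟩ := hS
  obtain ⟨ia, hia, hua⟩ := hc.1 e
  obtain ⟨ib, hib, hub⟩ := hc.1 f
  obtain ⟨ic, hic, huc⟩ := hc.1 g
  have adj : ∀ x y : E, x ≠ y → v ∈ G.ends x → v ∈ G.ends y → (lineGraph G).Adj x y :=
    fun x y hxy hx hy => ⟨hxy, ⟨v, Finset.mem_inter.2 ⟨hx, hy⟩⟩⟩
  have h1 : ia ≠ ib := fun hh => hc.2 ib e (hh ▸ hia) f hib (adj e f hef hve hvf)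
  have h2 : ia ≠ ic := fun hh => hc.2 ic e (hh ▸ hia) g hic (adj e g heg hve hvg)
  have h3 : ib ≠ ic := fun hh => hc.2 ic f (hh ▸ hib) g hic (adj f g hfg hvf hvg)
  rcases fin3_mem i ia ib ic h1 h2 h3 with rfl | rfl | rfl
  · exact Or.inl hia
  · exact Or.inr (Or.inl hib)
  · exact Or.inr (Or.inr hic)

section key
variable {W : Type*} [Fintype W] {X : SimpleGraph W} {e f g : W}

private lemma key_card
    (hef : X.Adj e f) (heg : X.Adj e g) (hfg : X.Adj f g)
    (htri : ∀ S : Set W, IsColorClass 3 X S → e ∈ S ∨ f ∈ S ∨ g ∈ S)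
    (fiso : X ≃g ColoringComplex 3 (ColoringComplex 3 X))
    (hφ : ∀ x, (fiso x : {T // IsColorClass 3 (ColoringComplex 3 X) T}).1 = phi 3 X x) :
    Nat.card ↥(X.neighborSet e) =
      2 ^ Nat.card ((ColoringComplex 3 X).induce ((phi 3 X e)ᶜ)).ConnectedComponent := by
  classical
  -- a coloring of X exists
  have hcolex : ∃ c : Fin 3 → Set W, IsColoring 3 X c := by
    by_contra h
    push_neg at h
    haveI hemp : IsEmpty {S : Set W // IsColorClass 3 X S} :=
      ⟨fun ⟨S, c, hc, _⟩ => (h c hc).elim⟩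
    haveI : Subsingleton (Set {S : Set W // IsColorClass 3 X S}) :=
      ⟨fun s t => Set.ext fun x => (hemp.false x).elim⟩
    have : fiso e = fiso f := Subtype.ext (Subsingleton.elim _ _)
    exact hef.ne (fiso.injective this)
  obtain ⟨c0, hc0⟩ := hcolex
  obtain ⟨i0, hi0, -⟩ := hc0.1 e
  have hS0 : (⟨c0 i0, ⟨c0, hc0, i0, rfl⟩⟩ : {S : Set W // IsColorClass 3 X S}) ∈ phi 3 X e := hi0
  -- the f-flip lemma
  have fflip : ∀ S T : {S : Set W // IsColorClass 3 X S}, (ColoringComplex 3 X).Adj S T →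
      e ∉ S.1 → e ∉ T.1 → ¬(f ∈ S.1 ↔ f ∈ T.1) := by
    intro S T hadj heS heT hiff
    by_cases hfS : f ∈ S.1
    · exact adj_disjoint hadj hfS (hiff.1 hfS)
    · have hgS : g ∈ S.1 := by rcases htri S.1 S.2 with h | h | h <;> tauto
      have hfT : f ∉ T.1 := fun h => hfS (hiff.2 h)
      have hgT : g ∈ T.1 := by rcases htri T.1 T.2 with h | h | h <;> tauto
      exact adj_disjoint hadj hgS hgT
  -- the D-flip and D-disjointness lemma, for D adjacent to fiso e in B²
  have Dkey : ∀ D : {T // IsColorClass 3 (ColoringComplex 3 X) T},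
      (ColoringComplex 3 (ColoringComplex 3 X)).Adj (fiso e) D →
      (∀ S, e ∈ S.1 → S ∉ D.1) ∧
      (∀ S T, (ColoringComplex 3 X).Adj S T → e ∉ S.1 → e ∉ T.1 → ¬(S ∈ D.1 ↔ T ∈ D.1)) := by
    intro D hadj
    obtain ⟨hne, c2, hc2, ⟨i, hi⟩, ⟨j, hj⟩⟩ := hadj
    rw [hφ] at hi
    have hij : i ≠ j := by
      rintro rfl
      exact hne (Subtype.ext (by rw [hφ, ← hi, hj]))
    have hdisj : ∀ S, e ∈ S.1 → S ∉ D.1 := by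
      intro S heS hSD
      obtain ⟨is, -, hus⟩ := hc2.1 S
      have h1 : S ∈ c2 i := by rw [hi]; exact heS
      have h2 : S ∈ c2 j := by rw [hj]; exact hSD
      exact hij ((hus i h1).trans (hus j h2).symm)
    refine ⟨hdisj, ?_⟩
    intro S T hST heS heT hiff
    by_cases hSD : S ∈ D.1
    · have hTD : T ∈ D.1 := hiff.1 hSD
      exact hc2.2 j S (by rw [hj]; exact hSD) T (by rw [hj]; exact hTD) hST
    · have hTD : T ∉ D.1 := fun h => hSD (hiff.2 h)
      obtain ⟨is, his, hus⟩ := hc2.1 S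
      obtain ⟨it, hit, hut⟩ := hc2.1 T
      have hsi : is ≠ i := by rintro rfl; exact heS (by rw [hi] at his; exact his)
      have hti : it ≠ i := by rintro rfl; exact heT (by rw [hi] at hit; exact hit)
      have hsj : is ≠ j := by rintro rfl; exact hSD (by rw [hj] at his; exact his)
      have htj : it ≠ j := by rintro rfl; exact hTD (by rw [hj] at hit; exact hit)
      have : is = it := fin3_eq' i j is it hij hsi hsj hti htj
      exact hc2.2 is S his T (by rw [this]; exact hit) hST
  -- invariance along reachability
  have hreach : ∀ (P : ↥((phi 3 X e)ᶜ) → Prop),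
      (∀ S T, ((ColoringComplex 3 X).induce ((phi 3 X e)ᶜ)).Adj S T → (P S ↔ P T)) →
      ∀ S T, ((ColoringComplex 3 X).induce ((phi 3 X e)ᶜ)).Reachable S T → (P S ↔ P T) := by
    intro P hP S T h
    obtain ⟨w⟩ := h
    induction w with
    | nil => exact Iff.rfl
    | cons h p ih => exact (hP _ _ h).trans ih
  -- membership unfolds
  have hmemc : ∀ S : ↥((phi 3 X e)ᶜ), e ∉ S.1.1 := fun S => S.2
  have hadj' : ∀ S T : ↥((phi 3 X e)ᶜ),
      ((ColoringComplex 3 X).induce ((phi 3 X e)ᶜ)).Adj S T ↔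
        (ColoringComplex 3 X).Adj S.1 T.1 := fun S T => Iff.rfl
  -- the map F
  let F : ↥((ColoringComplex 3 (ColoringComplex 3 X)).neighborSet (fiso e)) →
      (((ColoringComplex 3 X).induce ((phi 3 X e)ᶜ)).ConnectedComponent → Prop) :=
    fun D K => (f ∈ K.out.1.1 ↔ K.out.1 ∈ D.1.1)
  have hFmk : ∀ (D : ↥((ColoringComplex 3 (ColoringComplex 3 X)).neighborSet (fiso e)))
      (S : ↥((phi 3 X e)ᶜ)),
      (F D (((ColoringComplex 3 X).induce ((phi 3 X e)ᶜ)).connectedComponentMk S) ↔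
        (f ∈ S.1.1 ↔ S.1 ∈ D.1.1)) := by
    intro D S
    have hDadj : (ColoringComplex 3 (ColoringComplex 3 X)).Adj (fiso e) D.1 := D.2
    have hflip := (Dkey D.1 hDadj).2
    have hinv : ∀ S T : ↥((phi 3 X e)ᶜ),
        ((ColoringComplex 3 X).induce ((phi 3 X e)ᶜ)).Adj S T →
        ((f ∈ S.1.1 ↔ S.1 ∈ D.1.1) ↔ (f ∈ T.1.1 ↔ T.1 ∈ D.1.1)) := by
      intro S T h
      have h1 := fflip S.1 T.1 ((hadj' S T).1 h) (hmemc S) (hmemc T)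
      have h2 := hflip S.1 T.1 ((hadj' S T).1 h) (hmemc S) (hmemc T)
      tauto
    have hre := ConnectedComponent.exact
      ((((ColoringComplex 3 X).induce ((phi 3 X e)ᶜ)).connectedComponentMk S).out_eq)
    exact hreach _ hinv _ _ hre
  -- injectivity
  have hinj : Function.Injective F := by
    intro D1 D2 h
    apply Subtype.ext
    apply Subtype.ext
    ext S
    by_cases heS : e ∈ S.1
    · constructor
      · intro hS; exact absurd hS ((Dkey D1.1 D1.2).1 S heS)
      · intro hS; exact absurd hS ((Dkey D2.1 D2.2).1 S heS)
    · have hSc : S ∈ (phi 3 X e)ᶜ := heS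
      have h1 := hFmk D1 ⟨S, hSc⟩
      have h2 := hFmk D2 ⟨S, hSc⟩
      rw [congrFun h (((ColoringComplex 3 X).induce ((phi 3 X e)ᶜ)).connectedComponentMk
        ⟨S, hSc⟩)] at h1
      change S ∈ D1.1.1 ↔ S ∈ D2.1.1
      by_cases hfS : f ∈ S.1 <;> tauto
  -- surjectivity
  have hsurj : Function.Surjective F := by
    intro t
    set Dset : Set {S : Set W // IsColorClass 3 X S} :=
      {S | ∃ h : e ∉ S.1, (f ∈ S.1 ↔
        t (((ColoringComplex 3 X).induce ((phi 3 X e)ᶜ)).connectedComponentMk ⟨S, h⟩))}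
      with hDset
    set Rset : Set {S : Set W // IsColorClass 3 X S} :=
      {S | ∃ h : e ∉ S.1, ¬(f ∈ S.1 ↔
        t (((ColoringComplex 3 X).induce ((phi 3 X e)ᶜ)).connectedComponentMk ⟨S, h⟩))}
      with hRset
    set cD : Fin 3 → Set {S : Set W // IsColorClass 3 X S} := ![phi 3 X e, Dset, Rset]
      with hcDdef
    have hcDcol : IsColoring 3 (ColoringComplex 3 X) cD := by
      constructor
      · intro S
        by_cases heS : e ∈ S.1
        · refine ⟨0, heS, ?_⟩
          intro j hj
          rcases fin3_mem j 0 1 2 (by decide) (by decide) (by decide) with rfl | rfl | rfl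
          · rfl
          · obtain ⟨h, -⟩ := hj; exact absurd heS h
          · obtain ⟨h, -⟩ := hj; exact absurd heS h
        · by_cases hft : (f ∈ S.1 ↔
              t (((ColoringComplex 3 X).induce ((phi 3 X e)ᶜ)).connectedComponentMk ⟨S, heS⟩))
          · refine ⟨1, ⟨heS, hft⟩, ?_⟩
            intro j hj
            rcases fin3_mem j 0 1 2 (by decide) (by decide) (by decide) with rfl | rfl | rfl
            · exact absurd hj heS
            · rfl
            · obtain ⟨h, hn⟩ := hj; exact absurd hft hn
          · refine ⟨2, ⟨heS, hft⟩, ?_⟩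
            intro j hj
            rcases fin3_mem j 0 1 2 (by decide) (by decide) (by decide) with rfl | rfl | rfl
            · exact absurd hj heS
            · obtain ⟨h, hn⟩ := hj; exact absurd hn hft
            · rfl
      · intro i
        rcases fin3_mem i 0 1 2 (by decide) (by decide) (by decide) with rfl | rfl | rfl
        · intro S hS T hT hadj
          exact adj_disjoint hadj hS hT
        · rintro S ⟨hS1, hS2⟩ T ⟨hT1, hT2⟩ hadj
          have hGadj : ((ColoringComplex 3 X).induce ((phi 3 X e)ᶜ)).Adj ⟨S, hS1⟩ ⟨T, hT1⟩ := hadj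
          have hmk := ConnectedComponent.sound hGadj.reachable
          rw [hmk] at hS2
          exact fflip S T hadj hS1 hT1 (hS2.trans hT2.symm)
        · rintro S ⟨hS1, hS2⟩ T ⟨hT1, hT2⟩ hadj
          have hGadj : ((ColoringComplex 3 X).induce ((phi 3 X e)ᶜ)).Adj ⟨S, hS1⟩ ⟨T, hT1⟩ := hadj
          have hmk := ConnectedComponent.sound hGadj.reachable
          rw [hmk] at hS2
          apply fflip S T hadj hS1 hT1
          tauto
    have hDclass : IsColorClass 3 (ColoringComplex 3 X) Dset := ⟨cD, hcDcol, 1, rfl⟩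
    have hneq : fiso e ≠ ⟨Dset, hDclass⟩ := by
      intro hEq
      have hmem : (⟨c0 i0, ⟨c0, hc0, i0, rfl⟩⟩ : {S : Set W // IsColorClass 3 X S}) ∈ Dset := by
        rw [← show (fiso e).1 = Dset from congrArg Subtype.val hEq, hφ]
        exact hS0
      obtain ⟨h, -⟩ := hmem
      exact h hS0
    have hadjD : (ColoringComplex 3 (ColoringComplex 3 X)).Adj (fiso e) ⟨Dset, hDclass⟩ :=
      ⟨hneq, cD, hcDcol, ⟨0, by rw [show cD 0 = phi 3 X e from rfl, hφ]⟩, ⟨1, rfl⟩⟩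
    refine ⟨⟨⟨Dset, hDclass⟩, hadjD⟩, ?_⟩
    funext K
    have hout : ((ColoringComplex 3 X).induce ((phi 3 X e)ᶜ)).connectedComponentMk K.out = K :=
      K.out_eq
    have heK : e ∉ K.out.1.1 := hmemc K.out
    have hmem2 : K.out.1 ∈ Dset ↔ (f ∈ K.out.1.1 ↔ t K) := by
      constructor
      · rintro ⟨h, hh⟩
        rwa [show (⟨K.out.1, h⟩ : ↥((phi 3 X e)ᶜ)) = K.out from rfl, hout] at hh
      · intro hh
        refine ⟨heK, ?_⟩
        rwa [show (⟨K.out.1, heK⟩ : ↥((phi 3 X e)ᶜ)) = K.out from rfl, hout]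
    show (f ∈ K.out.1.1 ↔ K.out.1 ∈ Dset) = t K
    rw [eq_iff_iff, hmem2]
    tauto
  -- counting
  have hcard1 : Nat.card ↥(X.neighborSet e) =
      Nat.card ↥((ColoringComplex 3 (ColoringComplex 3 X)).neighborSet (fiso e)) :=
    Nat.card_congr (fiso.mapNeighborSet e)
  have hcard2 : Nat.card ↥((ColoringComplex 3 (ColoringComplex 3 X)).neighborSet (fiso e)) =
      Nat.card ((((ColoringComplex 3 X).induce ((phi 3 X e)ᶜ)).ConnectedComponent) → Prop) :=
    Nat.card_eq_of_bijective F ⟨hinj, hsurj⟩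
  have hcard3 : Nat.card ((((ColoringComplex 3 X).induce ((phi 3 X e)ᶜ)).ConnectedComponent)
      → Prop) = 2 ^ Nat.card (((ColoringComplex 3 X).induce ((phi 3 X e)ᶜ)).ConnectedComponent)
      := by
    rw [Nat.card_fun]
    congr 1
    simp
  rw [hcard1, hcard2, hcard3]

end key

section main
variable {V E : Type*} [DecidableEq V]

private lemma neighborSet_half (G : CubicGraph V E) {e f g : E} {v : V}
    (hcard : (G.ends e).card = 1) (hv : v ∈ G.ends e)
    (hef : e ≠ f) (heg : e ≠ g) (hfg : f ≠ g)
    (hvf : v ∈ G.ends f) (hvg : v ∈ G.ends g)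
    (hall : ∀ x, v ∈ G.ends x ↔ x = e ∨ x = f ∨ x = g) :
    (lineGraph G).neighborSet e = {f, g} := by
  have hends : G.ends e = {v} := by
    obtain ⟨a, ha⟩ := Finset.card_eq_one.mp hcard
    rw [ha] at hv ⊢
    rw [Finset.mem_singleton] at hv
    rw [hv]
  ext x
  simp only [mem_neighborSet, Set.mem_insert_iff, Set.mem_singleton_iff]
  constructor
  · rintro ⟨hne, y, hy⟩
    rw [hends, Finset.mem_inter, Finset.mem_singleton] at hy
    obtain ⟨rfl, hy2⟩ := hy
    rcases (hall x).1 hy2 with rfl | rfl | rfl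
    · exact absurd rfl hne
    · exact Or.inl rfl
    · exact Or.inr rfl
  · rintro (rfl | rfl)
    · exact ⟨hef, v, Finset.mem_inter.2 ⟨hv, hvf⟩⟩
    · exact ⟨heg, v, Finset.mem_inter.2 ⟨hv, hvg⟩⟩

private lemma neighborSet_full (G : CubicGraph V E) {e f g f' g' : E} {v w : V}
    (hvw : v ≠ w) (hends : G.ends e = {v, w})
    (hef : e ≠ f) (heg : e ≠ g) (hfg : f ≠ g)
    (hvf : v ∈ G.ends f) (hvg : v ∈ G.ends g)
    (hall : ∀ x, v ∈ G.ends x ↔ x = e ∨ x = f ∨ x = g)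
    (hef' : e ≠ f') (heg' : e ≠ g') (hfg' : f' ≠ g')
    (hwf : w ∈ G.ends f') (hwg : w ∈ G.ends g')
    (hall' : ∀ x, w ∈ G.ends x ↔ x = e ∨ x = f' ∨ x = g') :
    (lineGraph G).neighborSet e = {f, g, f', g'} := by
  have hv : v ∈ G.ends e := by rw [hends]; exact Finset.mem_insert_self _ _
  have hw : w ∈ G.ends e := by rw [hends]; simp
  ext x
  simp only [mem_neighborSet, Set.mem_insert_iff, Set.mem_singleton_iff]
  constructor
  · rintro ⟨hne, y, hy⟩
    rw [hends, Finset.mem_inter, Finset.mem_insert, Finset.mem_singleton] at hy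
    obtain ⟨hy1 | hy1, hy2⟩ := hy
    · subst hy1
      rcases (hall x).1 hy2 with rfl | rfl | rfl
      · exact absurd rfl hne
      · exact Or.inl rfl
      · exact Or.inr (Or.inl rfl)
    · subst hy1
      rcases (hall' x).1 hy2 with rfl | rfl | rfl
      · exact absurd rfl hne
      · exact Or.inr (Or.inr (Or.inl rfl))
      · exact Or.inr (Or.inr (Or.inr rfl))
  · rintro (rfl | rfl | rfl | rfl)
    · exact ⟨hef, v, Finset.mem_inter.2 ⟨hv, hvf⟩⟩
    · exact ⟨heg, v, Finset.mem_inter.2 ⟨hv, hvg⟩⟩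
    · exact ⟨hef', w, Finset.mem_inter.2 ⟨hw, hwf⟩⟩
    · exact ⟨heg', w, Finset.mem_inter.2 ⟨hw, hwg⟩⟩

end main


/-- If `G` is a cubic edge-reflexive graph and `X = L(G)`, then for every edge
`e` of `G` the graph `B(X) - φ_X(e)` is bipartite; moreover it is connected
when `e` is a half-edge, and it has exactly two connected components when `e`
is a full edge. -/
theorem edgeReflexive_deletePhi {V E : Type*} [DecidableEq V] [Fintype V] [Fintype E]
    (G : CubicGraph V E) (href : EdgeReflexive G) (e : E) :
    (∃ c : Fin 2 → Set ↥((phi 3 (lineGraph G) e)ᶜ),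
        IsColoring 2
          ((ColoringComplex 3 (lineGraph G)).induce ((phi 3 (lineGraph G) e)ᶜ)) c) ∧
    ((G.ends e).card = 1 →
      ((ColoringComplex 3 (lineGraph G)).induce ((phi 3 (lineGraph G) e)ᶜ)).Connected) ∧
    ((G.ends e).card = 2 →
      Nat.card
        ((ColoringComplex 3 (lineGraph G)).induce
          ((phi 3 (lineGraph G) e)ᶜ)).ConnectedComponent = 2) := by
  classical
  obtain ⟨fiso, hφ⟩ := href
  have hvex : ∃ v, v ∈ G.ends e := by
    rcases G.ends_card e with h | h
    · exact Finset.card_pos.mp (by omega)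
    · exact Finset.card_pos.mp (by omega)
  obtain ⟨v, hv⟩ := hvex
  obtain ⟨f, g, hef, heg, hfg, hvf, hvg, hall⟩ := exists_triple G hv
  have hXef : (lineGraph G).Adj e f := ⟨hef, v, Finset.mem_inter.2 ⟨hv, hvf⟩⟩
  have hXeg : (lineGraph G).Adj e g := ⟨heg, v, Finset.mem_inter.2 ⟨hv, hvg⟩⟩
  have hXfg : (lineGraph G).Adj f g := ⟨hfg, v, Finset.mem_inter.2 ⟨hvf, hvg⟩⟩
  have htri : ∀ S : Set E, IsColorClass 3 (lineGraph G) S → e ∈ S ∨ f ∈ S ∨ g ∈ S :=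
    fun S hS => class_trichotomy G hef heg hfg hv hvf hvg hS
  have hmemc : ∀ S : ↥((phi 3 (lineGraph G) e)ᶜ), e ∉ S.1.1 := fun S => S.2
  refine ⟨?_, ?_, ?_⟩
  · -- bipartite
    refine ⟨![{S | f ∈ S.1.1}, {S | f ∉ S.1.1}], ?_, ?_⟩
    · intro S
      by_cases hfS : f ∈ S.1.1
      · refine ⟨0, hfS, ?_⟩
        intro j hj
        rcases fin2_mem j with rfl | rfl
        · rfl
        · exact absurd hfS hj
      · refine ⟨1, hfS, ?_⟩
        intro j hj
        rcases fin2_mem j with rfl | rfl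
        · exact absurd hj hfS
        · rfl
    · intro i
      rcases fin2_mem i with rfl | rfl
      · intro S hS T hT hadj
        exact adj_disjoint (C := S.1) (D := T.1) hadj hS hT
      · intro S hS T hT hadj
        have hgS : g ∈ S.1.1 := by
          rcases htri S.1.1 S.1.2 with h | h | h
          · exact absurd h (hmemc S)
          · exact absurd h hS
          · exact h
        have hgT : g ∈ T.1.1 := by
          rcases htri T.1.1 T.1.2 with h | h | h
          · exact absurd h (hmemc T)
          · exact absurd h hT
          · exact h
        exact adj_disjoint (C := S.1) (D := T.1) hadj hgS hgT
  · -- half edge: connected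
    intro hcard
    have hns := neighborSet_half G hcard hv hef heg hfg hvf hvg hall
    have hdeg : Nat.card ↥((lineGraph G).neighborSet e) = 2 := by
      rw [hns, Nat.card_coe_set_eq, Set.ncard_pair hfg]
    have hkey := key_card hXef hXeg hXfg htri fiso hφ
    rw [hdeg] at hkey
    have hk : Nat.card ((ColoringComplex 3 (lineGraph G)).induce
        ((phi 3 (lineGraph G) e)ᶜ)).ConnectedComponent = 1 := by
      have := hkey.symm
      have h2 : (2 : ℕ) ^ 1 = 2 ^ Nat.card ((ColoringComplex 3 (lineGraph G)).induce
          ((phi 3 (lineGraph G) e)ᶜ)).ConnectedComponent := by rw [← hkey]; norm_num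
      exact (Nat.pow_right_injective (le_refl 2) h2).symm
    obtain ⟨hsub, hne⟩ := Nat.card_eq_one_iff_unique.mp hk
    rw [connected_iff]
    constructor
    · intro a b
      exact ConnectedComponent.exact (Subsingleton.elim _ _)
    · obtain ⟨K⟩ := hne
      exact ⟨K.out⟩
  · -- full edge: two components
    intro hcard
    obtain ⟨a, b, hab, hends⟩ := Finset.card_eq_two.mp hcard
    have hvmem : v = a ∨ v = b := by
      rw [hends, Finset.mem_insert, Finset.mem_singleton] at hv
      exact hv
    obtain ⟨w, hvw, hends'⟩ : ∃ w, v ≠ w ∧ G.ends e = {v, w} := by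
      rcases hvmem with rfl | rfl
      · exact ⟨b, hab, hends⟩
      · exact ⟨a, Ne.symm hab, by rw [hends, Finset.pair_comm]⟩
    have hw : w ∈ G.ends e := by rw [hends']; simp
    obtain ⟨f', g', hef', heg', hfg', hwf', hwg', hall'⟩ := exists_triple G hw
    -- cross distinctness
    have hcross : ∀ x, v ∈ G.ends x → w ∈ G.ends x → x = e := by
      intro x h1 h2
      have hsub : ({v, w} : Finset V) ⊆ G.ends x := by
        intro y hy
        rw [Finset.mem_insert, Finset.mem_singleton] at hy
        rcases hy with rfl | rfl
        · exact h1
        · exact h2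
      have hcard2 : ({v, w} : Finset V).card = 2 := Finset.card_pair hvw
      have hle : 2 ≤ (G.ends x).card := hcard2 ▸ Finset.card_le_card hsub
      have hxcard : (G.ends x).card = 2 := by rcases G.ends_card x with h | h <;> omega
      have : G.ends x = {v, w} :=
        (Finset.eq_of_subset_of_card_le hsub (by omega)).symm
      exact G.no_parallel x e hxcard (by rw [this, hends'])
    have hff' : f ≠ f' := by rintro rfl; exact hef (hcross f hvf hwf').symm
    have hfg2 : f ≠ g' := by rintro rfl; exact hef (hcross f hvf hwg').symm
    have hgf' : g ≠ f' := by rintro rfl; exact heg (hcross g hvg hwf').symm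
    have hgg' : g ≠ g' := by rintro rfl; exact heg (hcross g hvg hwg').symm
    have hns := neighborSet_full G hvw hends' hef heg hfg hvf hvg hall hef' heg' hfg'
      hwf' hwg' hall'
    have hdeg : Nat.card ↥((lineGraph G).neighborSet e) = 4 := by
      rw [hns, Nat.card_coe_set_eq]
      rw [Set.ncard_insert_of_notMem (by simp [hfg, hff', hfg2]) (Set.toFinite _)]
      rw [Set.ncard_insert_of_notMem (by simp [hgf', hgg']) (Set.toFinite _)]
      rw [Set.ncard_pair hfg']
    have hkey := key_card hXef hXeg hXfg htri fiso hφ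
    rw [hdeg] at hkey
    have h2 : (2 : ℕ) ^ 2 = 2 ^ Nat.card ((ColoringComplex 3 (lineGraph G)).induce
        ((phi 3 (lineGraph G) e)ᶜ)).ConnectedComponent := by rw [← hkey]; norm_num
    exact (Nat.pow_right_injective (le_refl 2) h2).symm
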